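/- Let n ≥ 1, α > 0, and let Q_n^(ℓ) be the generator of the symmetric exclusion process on K_n with ℓ black marbles and rate α. If ψ is an eigenvector of -Q_n^(ℓ) with eigenvalue λ, then ⟨ψ_-, ψ_-⟩ = ((ℓ+1)/(α(n-ℓ))) · (α(ℓ+1)(n-ℓ) - λ) · ⟨ψ, ψ⟩, where ψ_-(x) = Σ_{v : x(v)=1} ψ(x_v) for configurations x with ℓ+1 black marbles. -/

import Mathlib

open Finset

/-- Swap the values of a configuration at two vertices. -/
def swapAt {V : Type*} [DecidableEq V] (x : V → Bool) (u v : V) : V → Bool :=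
  fun w => if w = u then x v else if w = v then x u else x w

/-- Number of black marbles (`true` coordinates) of a configuration. -/
def countB {V : Type*} [Fintype V] (x : V → Bool) : ℕ :=
  (Finset.univ.filter fun v => x v = true).card

/-- The negative generator `-Q` of the symmetric exclusion process on `G` with rate `α`:
`(-Qf)(x) = α Σ_{e ∈ E(G)} (f x - f x_e)`, written as half the sum over ordered adjacent pairs. -/
noncomputable def negGen {V : Type*} [Fintype V] [DecidableEq V] (G : SimpleGraph V) [DecidableRel G.Adj]
    (α : ℝ) (f : (V → Bool) → ℝ) (x : V → Bool) : ℝ :=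
  (α / 2) * ∑ u : V, ∑ v : V, if G.Adj u v then f x - f (swapAt x u v) else 0

/-- `ψ_+(x) = Σ_{v : x(v)=0} ψ(x_v)`, adding a black marble at `v`. -/
def plusOp {V : Type*} [Fintype V] [DecidableEq V] (ψ : (V → Bool) → ℝ) (x : V → Bool) : ℝ :=
  ∑ v ∈ Finset.univ.filter (fun v => x v = false), ψ (Function.update x v true)

/-- `ψ_-(x) = Σ_{v : x(v)=1} ψ(x_v)`, removing the black marble at `v`. -/
def minusOp {V : Type*} [Fintype V] [DecidableEq V] (ψ : (V → Bool) → ℝ) (x : V → Bool) : ℝ :=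
  ∑ v ∈ Finset.univ.filter (fun v => x v = true), ψ (Function.update x v false)

/-- Inner product at level `ℓ` with respect to the uniform measure on `ℓ`-subsets. -/
noncomputable def innerL {V : Type*} [Fintype V] [DecidableEq V] (ℓ : ℕ) (f g : (V → Bool) → ℝ) : ℝ :=
  (((Fintype.card V).choose ℓ : ℝ))⁻¹ *
    ∑ x ∈ Finset.univ.filter (fun x : V → Bool => countB x = ℓ), f x * g x

/-- Inner product on the full configuration space with respect to the uniform measure. -/
noncomputable def innerF {V : Type*} [Fintype V] [DecidableEq V] (f g : (V → Bool) → ℝ) : ℝ :=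
  ((2 : ℝ) ^ (Fintype.card V))⁻¹ * ∑ x : V → Bool, f x * g x


section Aux
variable {n : ℕ}

lemma swapAt_self_of_eq (y : Fin n → Bool) {u v : Fin n} (h : y u = y v) :
    swapAt y u v = y := by
  funext w
  simp only [swapAt]
  split_ifs with h1 h2 <;> simp_all

lemma swapAt_comm (y : Fin n → Bool) (u v : Fin n) :
    swapAt y u v = swapAt y v u := by
  funext w
  simp only [swapAt]
  split_ifs with h1 h2 <;> simp_all

lemma filter_update_true (y : Fin n → Bool) (u : Fin n) :
    (univ.filter fun v => Function.update y u true v = true)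
      = insert u (univ.filter fun v => y v = true) := by
  ext v
  by_cases hv : v = u <;> simp [Function.update_apply, hv]

lemma filter_update_false (x : Fin n → Bool) (u : Fin n) :
    (univ.filter fun v => Function.update x u false v = true)
      = (univ.filter fun v => x v = true).erase u := by
  ext v
  by_cases hv : v = u <;> simp [Function.update_apply, hv]

lemma countB_update_true (y : Fin n → Bool) (u : Fin n) (hu : y u = false) :
    countB (Function.update y u true) = countB y + 1 := by
  unfold countB
  rw [filter_update_true, card_insert_of_notMem (by simp [hu])]

lemma countB_update_false (x : Fin n → Bool) (u : Fin n) (hu : x u = true) :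
    countB (Function.update x u false) + 1 = countB x := by
  unfold countB
  rw [filter_update_false, card_erase_of_mem (by simp [hu])]
  have : 0 < (univ.filter fun v => x v = true).card :=
    card_pos.mpr ⟨u, by simp [hu]⟩
  omega

lemma card_filter_false (y : Fin n → Bool) :
    (univ.filter fun v => y v = false).card = n - countB y := by
  have h := card_filter_add_card_filter_not (s := (univ : Finset (Fin n)))
    (p := fun v => y v = true)
  have he : (univ.filter fun v => ¬ y v = true) = univ.filter fun v => y v = false := by
    ext v; simp
  rw [he] at h
  unfold countB
  simp only [card_univ, Fintype.card_fin] at h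
  omega

lemma update_update_true_false (y : Fin n → Bool) (u : Fin n) (hu : y u = true) :
    Function.update (Function.update y u false) u true = y := by
  rw [Function.update_idem, ← hu, Function.update_eq_self]

lemma update_update_false_true (y : Fin n → Bool) (u : Fin n) (hu : y u = false) :
    Function.update (Function.update y u true) u false = y := by
  rw [Function.update_idem, ← hu, Function.update_eq_self]

lemma update_update_eq_swapAt (y : Fin n → Bool) (u v : Fin n)
    (hu : y u = false) (hv : y v = true) :
    Function.update (Function.update y u true) v false = swapAt y u v := by
  have huv : v ≠ u := by intro h; rw [h, hu] at hv; exact Bool.false_ne_true hv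
  funext w
  by_cases h1 : w = v
  · simp [Function.update_apply, swapAt, h1, huv, hu]
  · by_cases h2 : w = u
    · simp [Function.update_apply, swapAt, h1, h2, hv, huv.symm]
    · simp [Function.update_apply, swapAt, h1, h2]

end Aux

section Re
variable {n : ℕ}

lemma reindex (ℓ : ℕ) (F : (Fin n → Bool) → Fin n → ℝ) :
    ∑ x ∈ univ.filter (fun x : Fin n → Bool => countB x = ℓ + 1),
      ∑ u ∈ univ.filter (fun u => x u = true), F x u
    = ∑ y ∈ univ.filter (fun y : Fin n → Bool => countB y = ℓ),
      ∑ u ∈ univ.filter (fun u => y u = false), F (Function.update y u true) u := by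
  rw [Finset.sum_sigma', Finset.sum_sigma']
  refine Finset.sum_nbij' (fun p => ⟨Function.update p.1 p.2 false, p.2⟩)
    (fun p => ⟨Function.update p.1 p.2 true, p.2⟩) ?_ ?_ ?_ ?_ ?_
  · rintro ⟨x, u⟩ hp
    simp only [mem_sigma, mem_filter, mem_univ, true_and] at hp ⊢
    obtain ⟨hx, hu⟩ := hp
    have := countB_update_false x u hu
    exact ⟨by omega, Function.update_self _ _ _⟩
  · rintro ⟨y, u⟩ hp
    simp only [mem_sigma, mem_filter, mem_univ, true_and] at hp ⊢
    obtain ⟨hy, hu⟩ := hp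
    have := countB_update_true y u hu
    exact ⟨by omega, Function.update_self _ _ _⟩
  · rintro ⟨x, u⟩ hp
    simp only [mem_sigma, mem_filter, mem_univ, true_and] at hp
    simp only [Sigma.mk.inj_iff, heq_eq_eq, and_true]
    exact update_update_true_false x u hp.2
  · rintro ⟨y, u⟩ hp
    simp only [mem_sigma, mem_filter, mem_univ, true_and] at hp
    simp only [Sigma.mk.inj_iff, heq_eq_eq, and_true]
    exact update_update_false_true y u hp.2
  · rintro ⟨x, u⟩ hp
    simp only [mem_sigma, mem_filter, mem_univ, true_and] at hp
    rw [update_update_true_false x u hp.2]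

end Re

section S1
variable {n : ℕ}

lemma step1 (ℓ : ℕ) (hℓn : ℓ < n) (α : ℝ) (hα : 0 < α)
    (ψ : (Fin n → Bool) → ℝ) (lam : ℝ)
    (heig : ∀ x, countB x = ℓ →
      negGen (⊤ : SimpleGraph (Fin n)) α ψ x = lam * ψ x)
    (y : Fin n → Bool) (hy : countB y = ℓ) :
    α * ∑ u ∈ univ.filter (fun u => y u = false),
        ∑ v ∈ univ.filter (fun v => y v = true), ψ (swapAt y u v)
      = (α * ℓ * ((n : ℝ) - ℓ) - lam) * ψ y := by
  have h := heig y hy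
  unfold negGen at h
  -- rewrite the adjacency sum
  have hsplit : ∀ u v : Fin n,
      (if (⊤ : SimpleGraph (Fin n)).Adj u v then ψ y - ψ (swapAt y u v) else 0)
        = (if y u = false ∧ y v = true then ψ y - ψ (swapAt y u v) else 0)
          + (if y v = false ∧ y u = true then ψ y - ψ (swapAt y u v) else 0) := by
    intro u v
    simp only [SimpleGraph.top_adj]
    by_cases huv : u = v
    · subst huv
      simp
    · cases hu : y u <;> cases hv : y v
      · rw [swapAt_self_of_eq y (by rw [hu, hv])]
        simp [huv, hu, hv]
      · simp [huv, hu, hv]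
      · simp [huv, hu, hv]
      · rw [swapAt_self_of_eq y (by rw [hu, hv])]
        simp [huv, hu, hv]
  simp only [hsplit, Finset.sum_add_distrib] at h
  have hsym : (∑ u : Fin n, ∑ v : Fin n,
        if y v = false ∧ y u = true then ψ y - ψ (swapAt y u v) else 0)
      = ∑ u : Fin n, ∑ v : Fin n,
        if y u = false ∧ y v = true then ψ y - ψ (swapAt y u v) else 0 := by
    rw [Finset.sum_comm]
    refine Finset.sum_congr rfl fun u _ => Finset.sum_congr rfl fun v _ => ?_
    rw [swapAt_comm]
  rw [hsym] at h
  have hfilter : (∑ u : Fin n, ∑ v : Fin n,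
        if y u = false ∧ y v = true then ψ y - ψ (swapAt y u v) else 0)
      = ∑ u ∈ univ.filter (fun u => y u = false),
          ∑ v ∈ univ.filter (fun v => y v = true), (ψ y - ψ (swapAt y u v)) := by
    rw [Finset.sum_filter]
    refine Finset.sum_congr rfl fun u _ => ?_
    by_cases hu : y u = false
    · simp only [hu, if_true, true_and, Finset.sum_filter]
    · simp [hu]
  rw [hfilter] at h
  have hcards : (univ.filter (fun u => y u = false)).card = n - ℓ := by
    rw [card_filter_false, hy]
  have hcardt : (univ.filter (fun v => y v = true)).card = ℓ := hy
  have hS : (∑ u ∈ filter (fun u => y u = false) univ,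
      ∑ v ∈ filter (fun v => y v = true) univ, (ψ y - ψ (swapAt y u v)))
      = ((n : ℝ) - ℓ) * ((ℓ : ℝ) * ψ y)
        - ∑ u ∈ filter (fun u => y u = false) univ,
            ∑ v ∈ filter (fun v => y v = true) univ, ψ (swapAt y u v) := by
    simp only [Finset.sum_sub_distrib, Finset.sum_const, hcardt, hcards, nsmul_eq_mul]
    rw [Nat.cast_sub hℓn.le]
  rw [hS] at h
  linear_combination -h

end S1


/-- On the complete graph K_n, ⟨ψ₋, ψ₋⟩ = ((ℓ+1)/(α(n-ℓ)))·(α(ℓ+1)(n-ℓ) - λ)·⟨ψ, ψ⟩. -/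
theorem minusOp_length {n : ℕ} (hn : 1 ≤ n) (ℓ : ℕ) (hℓn : ℓ < n)
    (α : ℝ) (hα : 0 < α)
    (ψ : (Fin n → Bool) → ℝ) (lam : ℝ)
    (hψ : ∃ x, countB x = ℓ ∧ ψ x ≠ 0)
    (heig : ∀ x, countB x = ℓ →
      negGen (⊤ : SimpleGraph (Fin n)) α ψ x = lam * ψ x) :
    innerL (ℓ + 1) (minusOp ψ) (minusOp ψ)
      = (((ℓ : ℝ) + 1) / (α * ((n : ℝ) - ℓ))) * (α * ((ℓ : ℝ) + 1) * ((n : ℝ) - ℓ) - lam)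
          * innerL ℓ ψ ψ := by
  classical
  have expand : ∀ x : Fin n → Bool, minusOp ψ x * minusOp ψ x
      = ∑ u ∈ univ.filter (fun u => x u = true),
          (ψ (Function.update x u false) * ψ (Function.update x u false)
            + ∑ v ∈ univ.filter (fun v => Function.update x u false v = true),
                ψ (Function.update x u false) * ψ (Function.update x v false)) := by
    intro x
    unfold minusOp
    rw [Finset.sum_mul]
    refine Finset.sum_congr rfl fun u hu => ?_
    rw [filter_update_false]
    rw [← Finset.add_sum_erase _ _ hu]
    rw [mul_add, Finset.mul_sum]
  have main : ∑ x ∈ univ.filter (fun x : Fin n → Bool => countB x = ℓ + 1),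
        minusOp ψ x * minusOp ψ x
      = ∑ y ∈ univ.filter (fun y : Fin n → Bool => countB y = ℓ),
          ∑ u ∈ univ.filter (fun u => y u = false),
            (ψ y * ψ y + ∑ v ∈ univ.filter (fun v => y v = true),
                ψ y * ψ (swapAt y u v)) := by
    rw [Finset.sum_congr rfl (fun x _ => expand x)]
    rw [reindex ℓ (fun x u => ψ (Function.update x u false) * ψ (Function.update x u false)
        + ∑ v ∈ univ.filter (fun v => Function.update x u false v = true),
            ψ (Function.update x u false) * ψ (Function.update x v false))]
    refine Finset.sum_congr rfl fun y hy => Finset.sum_congr rfl fun u hu => ?_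
    simp only [mem_filter, mem_univ, true_and] at hy hu
    rw [update_update_false_true y u hu]
    congr 1
    refine Finset.sum_congr rfl fun v hv => ?_
    simp only [mem_filter, mem_univ, true_and] at hv
    rw [update_update_eq_swapAt y u v hu hv]
  have key : α * ∑ x ∈ univ.filter (fun x : Fin n → Bool => countB x = ℓ + 1),
        minusOp ψ x * minusOp ψ x
      = (α * ((ℓ : ℝ) + 1) * ((n : ℝ) - ℓ) - lam) *
          ∑ y ∈ univ.filter (fun y : Fin n → Bool => countB y = ℓ), ψ y * ψ y := by
    rw [main, Finset.mul_sum, Finset.mul_sum]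
    refine Finset.sum_congr rfl fun y hy => ?_
    simp only [mem_filter, mem_univ, true_and] at hy
    have hT := step1 ℓ hℓn α hα ψ lam heig y hy
    have hcards : (univ.filter (fun u => y u = false)).card = n - ℓ := by
      rw [card_filter_false, hy]
    rw [Finset.sum_add_distrib, Finset.sum_const, hcards]
    simp only [nsmul_eq_mul, Nat.cast_sub hℓn.le]
    simp only [← Finset.mul_sum]
    linear_combination (ψ y) * hT
  have hC : ((n.choose (ℓ + 1) : ℝ)) * ((ℓ : ℝ) + 1)
      = (n.choose ℓ : ℝ) * ((n : ℝ) - ℓ) := by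
    have h1 := Nat.choose_succ_right_eq n ℓ
    have h2 : ((n.choose (ℓ + 1) * (ℓ + 1) : ℕ) : ℝ)
        = ((n.choose ℓ * (n - ℓ) : ℕ) : ℝ) := by exact_mod_cast h1
    push_cast [Nat.cast_sub hℓn.le] at h2
    linarith
  have hC1 : (0 : ℝ) < (n.choose (ℓ + 1) : ℝ) := by
    exact_mod_cast Nat.choose_pos hℓn
  have hC0 : (0 : ℝ) < (n.choose ℓ : ℝ) := by
    exact_mod_cast Nat.choose_pos hℓn.le
  have hnl : (0 : ℝ) < (n : ℝ) - ℓ := by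
    have : (ℓ : ℝ) < n := by exact_mod_cast hℓn
    linarith
  unfold innerL
  simp only [Fintype.card_fin]
  rw [div_mul_eq_mul_div, div_mul_eq_mul_div]
  rw [eq_div_iff (by positivity)]
  field_simp
  simp only [sq]
  linear_combination ((n : ℝ) - ℓ) * (n.choose ℓ : ℝ) * key
    - (α * ((ℓ : ℝ) + 1) * ((n : ℝ) - ℓ) - lam) *
        (∑ y ∈ univ.filter (fun y : Fin n → Bool => countB y = ℓ), ψ y * ψ y) * hC
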